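/- If, in the setting of the previous kernel condition, for each i and all v, v_* one has (1/m_i)∇g_i(v) − (1/m_i)∇g_i(v_*) = λ(v,v_*)(v−v_*) for some scalar λ, and g_i is C³ with d ≥ 2, then the Hessian of g_i is a constant multiple of the identity: ∂_{v_ℓ}∂_{v_k} g_i = m_i λ^{(2)} δ_{kℓ} for some constant λ^{(2)}. -/

import Mathlib

/-- Auxiliary: if `a • v = b • w`, `v` is not a multiple of `w`, and `w ≠ 0`,
then `a = 0` and `b = 0`. -/
lemma aux_not_multiple {E : Type*} [AddCommGroup E] [Module ℝ E]
    {v w : E} (hw : w ≠ 0) (hvw : ∀ t : ℝ, v ≠ t • w) {a b : ℝ}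
    (h : a • v = b • w) : a = 0 ∧ b = 0 := by
  have ha : a = 0 := by
    by_contra ha
    exact hvw (b / a) (by rw [div_eq_inv_mul, mul_smul, ← h, ← mul_smul,
      inv_mul_cancel₀ ha, one_smul])
  refine ⟨ha, ?_⟩
  rw [ha, zero_smul] at h
  rcases smul_eq_zero.mp h.symm with hb | hb
  · exact hb
  · exact absurd hb hw

/-- if `∇g(v) − ∇g(v_*)` is always parallel to `v − v_*` and `g` is `C³`,
`d ≥ 2`, then the Hessian of `g` is a constant multiple of the identity:
`fderiv ℝ (gradient g) v = (m λ²) • id` for some constant `λ²`. -/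
theorem hessian_multiple_of_identity (d : ℕ) (hd : 2 ≤ d) (m : ℝ) (hm : 0 < m)
    (g : EuclideanSpace ℝ (Fin d) → ℝ) (hg : ContDiff ℝ 3 g)
    (hker : ∀ v vs : EuclideanSpace ℝ (Fin d),
      ∃ lam : ℝ, (1 / m) • gradient g v - (1 / m) • gradient g vs = lam • (v - vs)) :
    ∃ lam2 : ℝ, ∀ v : EuclideanSpace ℝ (Fin d),
      fderiv ℝ (gradient g) v
        = (m * lam2) • ContinuousLinearMap.id ℝ (EuclideanSpace ℝ (Fin d)) := by
  set G : EuclideanSpace ℝ (Fin d) → EuclideanSpace ℝ (Fin d) :=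
    fun v => (1 / m) • gradient g v with hGdef
  have hker' : ∀ v vs : EuclideanSpace ℝ (Fin d), ∃ lam : ℝ, G v - G vs = lam • (v - vs) :=
    hker
  have hc : ∀ v : EuclideanSpace ℝ (Fin d), ∃ lam : ℝ, G v - G 0 = lam • v := by
    intro v
    obtain ⟨lam, h⟩ := hker' v 0
    exact ⟨lam, by simpa using h⟩
  choose c hcspec using hc
  -- pair lemma: coefficients agree for non-parallel vectors
  have claimA : ∀ v w : EuclideanSpace ℝ (Fin d), w ≠ 0 → (∀ t : ℝ, v ≠ t • w) → c v = c w := by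
    intro v w hw hvw
    obtain ⟨l, hl⟩ := hker' v w
    have h1 : c v • v - c w • w = l • v - l • w := by
      have h0 : (G v - G 0) - (G w - G 0) = l • (v - w) := by
        rw [sub_sub_sub_cancel_right]; exact hl
      rw [hcspec v, hcspec w] at h0
      rw [h0, smul_sub]
    have h2 : (c v - l) • v = (c w - l) • w := by
      rw [sub_smul, sub_smul]
      linear_combination (norm := abel_nf) h1
    obtain ⟨ha, hb⟩ := aux_not_multiple hw hvw h2
    rw [sub_eq_zero] at ha hb
    rw [ha, hb]
  have h0d : (0 : ℕ) < d := by omega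
  have h1d : (1 : ℕ) < d := by omega
  set e₀ : EuclideanSpace ℝ (Fin d) := EuclideanSpace.single ⟨0, h0d⟩ 1 with he₀
  set e₁ : EuclideanSpace ℝ (Fin d) := EuclideanSpace.single ⟨1, h1d⟩ 1 with he₁
  have hne : (⟨0, h0d⟩ : Fin d) ≠ ⟨1, h1d⟩ := by simp
  have he₀0 : e₀ ≠ 0 := by
    intro h
    have h' : e₀ ⟨0, h0d⟩ = (0 : EuclideanSpace ℝ (Fin d)) ⟨0, h0d⟩ :=
      congrArg (fun x : EuclideanSpace ℝ (Fin d) => x ⟨0, h0d⟩) h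
    rw [he₀] at h'
    simp [EuclideanSpace.single_apply] at h'
  have he₁0 : e₁ ≠ 0 := by
    intro h
    have h' : e₁ ⟨1, h1d⟩ = (0 : EuclideanSpace ℝ (Fin d)) ⟨1, h1d⟩ :=
      congrArg (fun x : EuclideanSpace ℝ (Fin d) => x ⟨1, h1d⟩) h
    rw [he₁] at h'
    simp [EuclideanSpace.single_apply] at h'
  have hmul : ∀ s : ℝ, s ≠ 0 → ∀ t : ℝ, s • e₀ ≠ t • e₁ := by
    intro s hs t h
    have h' : (s • e₀) ⟨0, h0d⟩ = (t • e₁) ⟨0, h0d⟩ :=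
      congrArg (fun x : EuclideanSpace ℝ (Fin d) => x ⟨0, h0d⟩) h
    have e0v : (s • e₀) ⟨0, h0d⟩ = s := by
      rw [he₀]; simp [EuclideanSpace.single_apply]
    have e1v : (t • e₁) ⟨0, h0d⟩ = 0 := by
      rw [he₁]; simp [EuclideanSpace.single_apply, hne]
    rw [e0v, e1v] at h'
    exact hs h'
  -- Claim B: all nonzero vectors have the same coefficient
  have claimB : ∀ v : EuclideanSpace ℝ (Fin d), v ≠ 0 → c v = c e₀ := by
    intro v hv
    by_cases hcase : ∀ t : ℝ, v ≠ t • e₀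
    · exact claimA v e₀ he₀0 hcase
    · push_neg at hcase
      obtain ⟨t, ht⟩ := hcase
      have ht0 : t ≠ 0 := by
        intro h; apply hv; rw [ht, h, zero_smul]
      have h1 : c v = c e₁ := by
        apply claimA v e₁ he₁0
        intro s hs
        exact hmul t ht0 s (ht ▸ hs)
      have h2 : c e₀ = c e₁ := by
        apply claimA e₀ e₁ he₁0
        intro s hs
        have h3 := hmul 1 one_ne_zero s
        rw [one_smul] at h3
        exact h3 hs
      rw [h1, h2]
  -- G is affine
  have haff : ∀ v : EuclideanSpace ℝ (Fin d), G v = G 0 + c e₀ • v := by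
    intro v
    by_cases hv : v = 0
    · simp [hv]
    · have h := hcspec v
      rw [claimB v hv] at h
      rw [← h]; abel
  have hm0 : m ≠ 0 := ne_of_gt hm
  have hgrad : gradient g = fun v => m • G 0 + (m * c e₀) • v := by
    funext v
    have h : m • G v = gradient g v := by
      rw [hGdef]
      simp only
      rw [smul_smul, mul_one_div, div_self hm0, one_smul]
    rw [← h, haff v, smul_add]
    congr 1
    rw [smul_smul]
  refine ⟨c e₀, fun v => ?_⟩
  rw [hgrad]
  have hD : HasFDerivAt (fun w : EuclideanSpace ℝ (Fin d) => m • G 0 + (m * c e₀) • w)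
      ((m * c e₀) • ContinuousLinearMap.id ℝ (EuclideanSpace ℝ (Fin d))) v := by
    have h := ((hasFDerivAt_id (𝕜 := ℝ) v).const_smul (m * c e₀)).const_add (m • G 0)
    simpa using h
  exact hD.fderiv
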